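/- With π_B as above and φ = −x₁ dx₁ ∧ dx₂ ∧ dx₃, the twisted Poisson equation [π_B, π_B] = 2 ∧³π̃_B(φ) holds on ℝ⁶. -/

import Mathlib

open scoped BigOperators

noncomputable section

/-- Phase space ℝ⁶ with coordinates (x₁,x₂,x₃,p₁,p₂,p₃) indexed by 0,…,5. -/
abbrev M6 := Fin 6 → ℝ

/-- Partial derivative in the `i`-th coordinate direction. -/
def pd (i : Fin 6) (F : M6 → ℝ) (m : M6) : ℝ := fderiv ℝ F m (Pi.single i 1)

/-- Kronecker delta, viewed as the components of the coordinate 1-form `dx_a`. -/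
def dd (a i : Fin 6) : ℝ := if a = i then 1 else 0

/-- Components of `dx_a ∧ dx_b` (equivalently of `∂_a ∧ ∂_b`). -/
def w2 (a b i j : Fin 6) : ℝ := dd a i * dd b j - dd a j * dd b i

/-- Components of `dx_a ∧ dx_b ∧ dx_c` (equivalently of `∂_a ∧ ∂_b ∧ ∂_c`). -/
def w3 (a b c i j k : Fin 6) : ℝ :=
  dd a i * (dd b j * dd c k - dd b k * dd c j)
    - dd a j * (dd b i * dd c k - dd b k * dd c i)
    + dd a k * (dd b i * dd c j - dd b j * dd c i)

/-- Components of the 2-form ω_B = Σᵢ dxᵢ∧dpᵢ + x₂² dx₂∧dx₃ + x₁x₂ dx₁∧dx₃. -/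
def ωB (m : M6) (i j : Fin 6) : ℝ :=
  w2 0 3 i j + w2 1 4 i j + w2 2 5 i j
    + (m 1) ^ 2 * w2 1 2 i j + m 0 * m 1 * w2 0 2 i j

/-- Components of the bivector π_B = Σᵢ ∂xᵢ∧∂pᵢ + x₂² ∂p₂∧∂p₃ + x₁x₂ ∂p₁∧∂p₃. -/
def πB (m : M6) (i j : Fin 6) : ℝ :=
  w2 0 3 i j + w2 1 4 i j + w2 2 5 i j
    + (m 1) ^ 2 * w2 4 5 i j + m 0 * m 1 * w2 3 5 i j

/-- Components of the Schouten–Nijenhuis bracket `[π,π]` of a bivector field. -/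
def sch (π : M6 → Fin 6 → Fin 6 → ℝ) (m : M6) (i j k : Fin 6) : ℝ :=
  2 * ∑ l, (π m i l * pd l (fun x => π x j k) m
      + π m j l * pd l (fun x => π x k i) m
      + π m k l * pd l (fun x => π x i j) m)

/-- The background 3-form φ = −x₁ dx₁∧dx₂∧dx₃ on ℝ⁶. -/
def φB (m : M6) (i j k : Fin 6) : ℝ := -(m 0) * w3 0 1 2 i j k

/-- Components of the 3-vector `∧³π̃(φ)` obtained by applying `π̃` to each slot of φ. -/
def triple (π : M6 → Fin 6 → Fin 6 → ℝ) (φ : M6 → Fin 6 → Fin 6 → Fin 6 → ℝ)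
    (m : M6) (i j k : Fin 6) : ℝ :=
  ∑ a, ∑ b, ∑ c, φ m a b c * π m i a * π m j b * π m k c


lemma pd_piB (l j k : Fin 6) (m : M6) :
    pd l (fun x => πB x j k) m =
      (2 * m 1 * dd l 1) * w2 4 5 j k + (m 1 * dd l 0 + m 0 * dd l 1) * w2 3 5 j k := by
  have h1 : HasFDerivAt (fun x : M6 => x 1)
      (ContinuousLinearMap.proj (R := ℝ) (φ := fun _ : Fin 6 => ℝ) 1) m :=
    (ContinuousLinearMap.proj (R := ℝ) (φ := fun _ : Fin 6 => ℝ) (1 : Fin 6)).hasFDerivAt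
  have h0 : HasFDerivAt (fun x : M6 => x 0)
      (ContinuousLinearMap.proj (R := ℝ) (φ := fun _ : Fin 6 => ℝ) 0) m :=
    (ContinuousLinearMap.proj (R := ℝ) (φ := fun _ : Fin 6 => ℝ) (0 : Fin 6)).hasFDerivAt
  have e : (fun x : M6 => πB x j k) = fun x =>
      ((w2 0 3 j k + w2 1 4 j k + w2 2 5 j k) + (x 1 * x 1) * w2 4 5 j k)
        + x 0 * x 1 * w2 3 5 j k := by
    funext x; simp only [πB]; ring
  rw [pd, e]
  have H := (((h1.mul h1).mul_const (w2 4 5 j k)).const_add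
      (w2 0 3 j k + w2 1 4 j k + w2 2 5 j k)).add ((h0.mul h1).mul_const (w2 3 5 j k))
  rw [(show HasFDerivAt (fun x : M6 => ((w2 0 3 j k + w2 1 4 j k + w2 2 5 j k) + (x 1 * x 1) * w2 4 5 j k)
      + x 0 * x 1 * w2 3 5 j k) _ m from H).fderiv]
  simp [dd, Pi.single_apply]
  fin_cases l <;> norm_num [Fin.ext_iff] <;> ring

lemma piB_00 (m : M6) : πB m 0 0 = 0 := by simp only [πB, w2, dd]; norm_num (config := { decide := true })
lemma piB_01 (m : M6) : πB m 0 1 = 0 := by simp only [πB, w2, dd]; norm_num (config := { decide := true })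
lemma piB_02 (m : M6) : πB m 0 2 = 0 := by simp only [πB, w2, dd]; norm_num (config := { decide := true })
lemma piB_03 (m : M6) : πB m 0 3 = (1) := by simp only [πB, w2, dd]; norm_num (config := { decide := true })
lemma piB_04 (m : M6) : πB m 0 4 = 0 := by simp only [πB, w2, dd]; norm_num (config := { decide := true })
lemma piB_05 (m : M6) : πB m 0 5 = 0 := by simp only [πB, w2, dd]; norm_num (config := { decide := true })
lemma piB_10 (m : M6) : πB m 1 0 = 0 := by simp only [πB, w2, dd]; norm_num (config := { decide := true })
lemma piB_11 (m : M6) : πB m 1 1 = 0 := by simp only [πB, w2, dd]; norm_num (config := { decide := true })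
lemma piB_12 (m : M6) : πB m 1 2 = 0 := by simp only [πB, w2, dd]; norm_num (config := { decide := true })
lemma piB_13 (m : M6) : πB m 1 3 = 0 := by simp only [πB, w2, dd]; norm_num (config := { decide := true })
lemma piB_14 (m : M6) : πB m 1 4 = (1) := by simp only [πB, w2, dd]; norm_num (config := { decide := true })
lemma piB_15 (m : M6) : πB m 1 5 = 0 := by simp only [πB, w2, dd]; norm_num (config := { decide := true })
lemma piB_20 (m : M6) : πB m 2 0 = 0 := by simp only [πB, w2, dd]; norm_num (config := { decide := true })
lemma piB_21 (m : M6) : πB m 2 1 = 0 := by simp only [πB, w2, dd]; norm_num (config := { decide := true })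
lemma piB_22 (m : M6) : πB m 2 2 = 0 := by simp only [πB, w2, dd]; norm_num (config := { decide := true })
lemma piB_23 (m : M6) : πB m 2 3 = 0 := by simp only [πB, w2, dd]; norm_num (config := { decide := true })
lemma piB_24 (m : M6) : πB m 2 4 = 0 := by simp only [πB, w2, dd]; norm_num (config := { decide := true })
lemma piB_25 (m : M6) : πB m 2 5 = (1) := by simp only [πB, w2, dd]; norm_num (config := { decide := true })
lemma piB_30 (m : M6) : πB m 3 0 = (-1) := by simp only [πB, w2, dd]; norm_num (config := { decide := true })
lemma piB_31 (m : M6) : πB m 3 1 = 0 := by simp only [πB, w2, dd]; norm_num (config := { decide := true })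
lemma piB_32 (m : M6) : πB m 3 2 = 0 := by simp only [πB, w2, dd]; norm_num (config := { decide := true })
lemma piB_33 (m : M6) : πB m 3 3 = 0 := by simp only [πB, w2, dd]; norm_num (config := { decide := true })
lemma piB_34 (m : M6) : πB m 3 4 = 0 := by simp only [πB, w2, dd]; norm_num (config := { decide := true })
lemma piB_35 (m : M6) : πB m 3 5 = m 0 * m 1 := by simp only [πB, w2, dd]; norm_num (config := { decide := true })
lemma piB_40 (m : M6) : πB m 4 0 = 0 := by simp only [πB, w2, dd]; norm_num (config := { decide := true })
lemma piB_41 (m : M6) : πB m 4 1 = (-1) := by simp only [πB, w2, dd]; norm_num (config := { decide := true })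
lemma piB_42 (m : M6) : πB m 4 2 = 0 := by simp only [πB, w2, dd]; norm_num (config := { decide := true })
lemma piB_43 (m : M6) : πB m 4 3 = 0 := by simp only [πB, w2, dd]; norm_num (config := { decide := true })
lemma piB_44 (m : M6) : πB m 4 4 = 0 := by simp only [πB, w2, dd]; norm_num (config := { decide := true })
lemma piB_45 (m : M6) : πB m 4 5 = m 1 ^ 2 := by simp only [πB, w2, dd]; norm_num (config := { decide := true })
lemma piB_50 (m : M6) : πB m 5 0 = 0 := by simp only [πB, w2, dd]; norm_num (config := { decide := true })
lemma piB_51 (m : M6) : πB m 5 1 = 0 := by simp only [πB, w2, dd]; norm_num (config := { decide := true })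
lemma piB_52 (m : M6) : πB m 5 2 = (-1) := by simp only [πB, w2, dd]; norm_num (config := { decide := true })
lemma piB_53 (m : M6) : πB m 5 3 = -(m 0 * m 1) := by simp only [πB, w2, dd]; norm_num (config := { decide := true })
lemma piB_54 (m : M6) : πB m 5 4 = -(m 1 ^ 2) := by simp only [πB, w2, dd]; norm_num (config := { decide := true })
lemma piB_55 (m : M6) : πB m 5 5 = 0 := by simp only [πB, w2, dd]; norm_num (config := { decide := true })

set_option maxHeartbeats 4000000 in
lemma sch_red (m : M6) (i j k : Fin 6) : sch πB m i j k =
    2 * (πB m i 0 * (m 1 * w2 3 5 j k) + πB m i 1 * (2 * m 1 * w2 4 5 j k + m 0 * w2 3 5 j k)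
       + πB m j 0 * (m 1 * w2 3 5 k i) + πB m j 1 * (2 * m 1 * w2 4 5 k i + m 0 * w2 3 5 k i)
       + πB m k 0 * (m 1 * w2 3 5 i j) + πB m k 1 * (2 * m 1 * w2 4 5 i j + m 0 * w2 3 5 i j)) := by
  simp only [sch, Fin.sum_univ_six, pd_piB]
  simp only [dd]
  norm_num (config := { decide := true })
  ring

set_option maxHeartbeats 4000000 in
lemma triple_red (m : M6) (i j k : Fin 6) : triple πB φB m i j k =
    -(m 0) * (πB m i 0 * (πB m j 1 * πB m k 2 - πB m j 2 * πB m k 1)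
      - πB m i 1 * (πB m j 0 * πB m k 2 - πB m j 2 * πB m k 0)
      + πB m i 2 * (πB m j 0 * πB m k 1 - πB m j 1 * πB m k 0)) := by
  simp only [triple, Fin.sum_univ_six, φB, w3, dd]
  norm_num (config := { decide := true })
  ring



set_option maxHeartbeats 4000000 in
/-- The twisted Poisson equation `[π_B,π_B] = 2 ∧³π̃_B(φ)` holds on ℝ⁶. -/
theorem piB_twisted_poisson :
    ∀ m : M6, ∀ i j k, sch πB m i j k = 2 * triple πB φB m i j k := by
  intro m i j k
  rw [sch_red, triple_red]
  fin_cases i <;> fin_cases j <;> fin_cases k <;>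
    (simp only [πB, w2, dd]
     norm_num (config := { decide := true }) <;> first | tauto | ring)


end
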